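/- Let n, k ≥ 1. Let γ = (γ₁,…,γₙ) and δ = (δ₁,…,δₙ) be regular k-jets of curves in ℂⁿ. For 1 ≤ i ≤ k let S_γ^i denote the set of those P in the ℂ-vector space V of polynomials in ℂ[x₁,…,xₙ] of total degree at most k with zero constant term such that P(γ₁(t),…,γₙ(t)) ≡ 0 modulo t^{i+1}, and similarly S_δ^i. Then S_γ^i = S_δ^i for all i = 1,…,k if and only if there exists a polynomial φ ∈ ℂ[t] with φ(0) = 0 and nonzero coefficient of t such that δ_j(t) ≡ γ_j(φ(t)) modulo t^{k+1} for every j = 1,…,n. (In other words, the map sending a regular k-jet γ to the flag of solution spaces S_γ^1 ⊇ S_γ^2 ⊇ … ⊇ S_γ^k is invariant under the reparametrisation group 𝔾_k of k-jets of biholomorphic germs (ℂ,0) → (ℂ,0) and is injective on 𝔾_k-orbits.) -/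

import Mathlib

open Polynomial MvPolynomial


private lemma comp_eq_aeval (p q : Polynomial ℂ) : p.comp q = Polynomial.aeval q p := by
  rw [Polynomial.aeval_def, Polynomial.comp, Polynomial.algebraMap_eq]

private lemma lemA {q p : Polynomial ℂ} (hq : q.coeff 0 = 0) {m : ℕ}
    (h : (Polynomial.X : Polynomial ℂ) ^ m ∣ p) :
    (Polynomial.X : Polynomial ℂ) ^ m ∣ p.comp q := by
  obtain ⟨w, rfl⟩ := h
  rw [mul_comp, pow_comp, X_comp]
  exact Dvd.dvd.mul_right (pow_dvd_pow_of_dvd (X_dvd_iff.mpr hq) m) _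

private lemma lemB {q p : Polynomial ℂ} (hq0 : q.coeff 0 = 0) (hq1 : q.coeff 1 ≠ 0)
    {m : ℕ} (h : (Polynomial.X : Polynomial ℂ) ^ m ∣ p.comp q) :
    (Polynomial.X : Polynomial ℂ) ^ m ∣ p := by
  induction m generalizing p with
  | zero => simp
  | succ m ih =>
    obtain ⟨w, rfl⟩ := ih (dvd_trans (pow_dvd_pow _ (Nat.le_succ m)) h)
    rw [mul_comp, pow_comp, X_comp] at h
    have hqX : q = q.divX * Polynomial.X := by
      have := q.divX_mul_X_add; rw [hq0, map_zero, add_zero] at this; exact this.symm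
    have hpow : q ^ m = Polynomial.X ^ m * q.divX ^ m := by
      conv_lhs => rw [hqX]
      ring
    have h3 : (Polynomial.X : Polynomial ℂ) ^ (m + 1) ∣
        Polynomial.X ^ m * (q.divX ^ m * w.comp q) := by
      rwa [hpow, mul_assoc] at h
    rw [pow_succ'] at h3
    have hx : (Polynomial.X : Polynomial ℂ) ^ m ≠ 0 := pow_ne_zero _ X_ne_zero
    have h4 : (Polynomial.X : Polynomial ℂ) ∣ q.divX ^ m * w.comp q := by
      have h3' : (Polynomial.X : Polynomial ℂ) ^ m * Polynomial.X ∣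
          Polynomial.X ^ m * (q.divX ^ m * w.comp q) := by
        rwa [mul_comm ((Polynomial.X : Polynomial ℂ)) _] at h3
      exact (mul_dvd_mul_iff_left hx).mp h3'
    have h5 : w.coeff 0 = 0 := by
      rw [X_dvd_iff] at h4
      rw [coeff_zero_eq_eval_zero, Polynomial.eval_mul, Polynomial.eval_pow,
        Polynomial.eval_comp] at h4
      have hq0' : Polynomial.eval 0 q = 0 := by rw [← coeff_zero_eq_eval_zero]; exact hq0
      have hd : Polynomial.eval 0 q.divX = q.coeff 1 := by
        rw [← coeff_zero_eq_eval_zero, coeff_divX]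
      rw [hq0', hd, ← coeff_zero_eq_eval_zero] at h4
      exact (mul_eq_zero.mp h4).resolve_left (pow_ne_zero _ hq1)
    rw [pow_succ]
    exact mul_dvd_mul (dvd_refl _) (X_dvd_iff.mpr h5)

private lemma lemC {n : ℕ} (γ δ : Fin n → Polynomial ℂ) (d : Polynomial ℂ)
    (h : ∀ j, d ∣ γ j - δ j) (P : MvPolynomial (Fin n) ℂ) :
    d ∣ MvPolynomial.aeval γ P - MvPolynomial.aeval δ P := by
  induction P using MvPolynomial.induction_on with
  | C a => simp
  | add p q hp hq =>
    rw [map_add, map_add]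
    have e : MvPolynomial.aeval γ p + MvPolynomial.aeval γ q -
        (MvPolynomial.aeval δ p + MvPolynomial.aeval δ q) =
        (MvPolynomial.aeval γ p - MvPolynomial.aeval δ p) +
        (MvPolynomial.aeval γ q - MvPolynomial.aeval δ q) := by ring
    rw [e]; exact dvd_add hp hq
  | mul_X p j hp =>
    rw [map_mul, map_mul, MvPolynomial.aeval_X, MvPolynomial.aeval_X]
    have e : MvPolynomial.aeval γ p * γ j - MvPolynomial.aeval δ p * δ j =
        (MvPolynomial.aeval γ p - MvPolynomial.aeval δ p) * γ j +
        MvPolynomial.aeval δ p * (γ j - δ j) := by ring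
    rw [e]; exact dvd_add (Dvd.dvd.mul_right hp _) (Dvd.dvd.mul_left (h j) _)

private lemma lemD {a b : Polynomial ℂ} (p : Polynomial ℂ) {d : Polynomial ℂ} (h : d ∣ a - b) :
    d ∣ p.comp a - p.comp b := by
  refine h.trans ?_
  induction p using Polynomial.induction_on' with
  | monomial n c =>
    rw [← Polynomial.C_mul_X_pow_eq_monomial]
    simp only [mul_comp, C_comp, pow_comp, X_comp]
    rw [← mul_sub]
    exact Dvd.dvd.mul_left (sub_dvd_pow_sub_pow a b n) _
  | add p q hp hq =>
    rw [add_comp, add_comp]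
    have e : p.comp a + q.comp a - (p.comp b + q.comp b) =
        (p.comp a - p.comp b) + (q.comp a - q.comp b) := by ring
    rw [e]; exact dvd_add hp hq

private lemma comp_coeff_zero {p q : Polynomial ℂ} (hp : p.coeff 0 = 0) (hq : q.coeff 0 = 0) :
    (p.comp q).coeff 0 = 0 := by
  rw [coeff_zero_eq_eval_zero, Polynomial.eval_comp]
  rw [coeff_zero_eq_eval_zero] at hp hq
  rw [hq, hp]

private lemma comp_coeff_one (p q : Polynomial ℂ) (hq : q.coeff 0 = 0) :
    (p.comp q).coeff 1 = p.coeff 1 * q.coeff 1 := by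
  have h0 : ∀ r : Polynomial ℂ, r.coeff 1 = Polynomial.eval 0 (derivative r) := by
    intro r
    rw [← coeff_zero_eq_eval_zero, coeff_derivative]
    push_cast; ring
  rw [h0, derivative_comp, Polynomial.eval_mul, Polynomial.eval_comp]
  have hq' : Polynomial.eval 0 q = 0 := by rw [← coeff_zero_eq_eval_zero]; exact hq
  rw [hq', ← h0, ← h0]
  ring
private lemma comp_add_expansion (f a e : Polynomial ℂ) :
    ∃ K, f.comp (a + e) = f.comp a + (derivative f).comp a * e + K * e ^ 2 := by
  have h : ∀ x : Polynomial ℂ, f.comp x = Polynomial.eval x (f.map Polynomial.C) := by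
    intro x; rw [Polynomial.comp, ← Polynomial.eval_map]
  have h' : (derivative f).comp a =
      Polynomial.eval a (derivative (f.map Polynomial.C)) := by
    rw [Polynomial.derivative_map, Polynomial.comp, ← Polynomial.eval_map]
  obtain ⟨K, hK⟩ := Polynomial.binomExpansion (f.map Polynomial.C) a e
  exact ⟨K, by rw [h, hK, ← h, ← h']⟩

private lemma inv_lemma (f : Polynomial ℂ) (h0 : f.coeff 0 = 0) (h1 : f.coeff 1 ≠ 0) (m : ℕ) :
    ∃ ψ : Polynomial ℂ, ψ.coeff 0 = 0 ∧
      (Polynomial.X : Polynomial ℂ) ^ (m + 1) ∣ f.comp ψ - Polynomial.X := by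
  induction m with
  | zero =>
    refine ⟨Polynomial.X, Polynomial.coeff_X_zero, ?_⟩
    rw [pow_one, X_dvd_iff, Polynomial.comp_X, Polynomial.coeff_sub, h0,
      Polynomial.coeff_X_zero, sub_zero]
  | succ m ih =>
    obtain ⟨ψ, hψ0, hdvd⟩ := ih
    obtain ⟨s, hs⟩ := hdvd
    set c : ℂ := -(s.coeff 0) * (f.coeff 1)⁻¹ with hc
    set e : Polynomial ℂ := Polynomial.C c * Polynomial.X ^ (m + 1) with he
    obtain ⟨K, hK⟩ := comp_add_expansion f ψ e
    refine ⟨ψ + e, ?_, ?_⟩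
    · rw [Polynomial.coeff_add, hψ0, he, Polynomial.coeff_C_mul, Polynomial.coeff_X_pow]
      simp
    · rw [hK]
      have key : f.comp ψ + (derivative f).comp ψ * e + K * e ^ 2 - Polynomial.X =
          Polynomial.X ^ (m + 1) * (s + Polynomial.C c * (derivative f).comp ψ) +
            (K * Polynomial.C c ^ 2 * Polynomial.X ^ m) * Polynomial.X ^ (m + 2) := by
        rw [he]
        have : f.comp ψ - Polynomial.X = Polynomial.X ^ (m+1) * s := hs
        have e2 : f.comp ψ = Polynomial.X ^ (m+1) * s + Polynomial.X := by
          rw [← this]; ring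
        rw [e2]; ring
      rw [key]
      refine dvd_add (?_) (Dvd.dvd.mul_left (pow_dvd_pow _ (by omega)) _)
      have hder : (s + Polynomial.C c * (derivative f).comp ψ).coeff 0 = 0 := by
        rw [Polynomial.coeff_add, Polynomial.coeff_C_mul]
        have hcomp : ((derivative f).comp ψ).coeff 0 = f.coeff 1 := by
          rw [coeff_zero_eq_eval_zero, Polynomial.eval_comp]
          have hev : Polynomial.eval 0 ψ = 0 := by
            rw [← coeff_zero_eq_eval_zero]; exact hψ0
          rw [hev, ← coeff_zero_eq_eval_zero, Polynomial.coeff_derivative]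
          push_cast; ring
        rw [hcomp, hc]
        field_simp
        ring
      rw [pow_succ, pow_succ]
      have : (Polynomial.X : Polynomial ℂ) ^ m * Polynomial.X * Polynomial.X =
          Polynomial.X ^ (m+1) * Polynomial.X := by ring
      rw [this]
      exact mul_dvd_mul (dvd_refl _) (X_dvd_iff.mpr hder)

private noncomputable def trunc (k : ℕ) (u : Polynomial ℂ) : Polynomial ℂ :=
  ∑ m ∈ Finset.Icc 1 k, Polynomial.C (u.coeff m) * Polynomial.X ^ m

private lemma trunc_coeff (k : ℕ) (u : Polynomial ℂ) (d : ℕ) :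
    (trunc k u).coeff d = if d ∈ Finset.Icc 1 k then u.coeff d else 0 := by
  rw [trunc, Polynomial.finset_sum_coeff]
  simp only [Polynomial.coeff_C_mul, Polynomial.coeff_X_pow, mul_ite, mul_one, mul_zero]
  exact Finset.sum_ite_eq (Finset.Icc 1 k) d (fun m => u.coeff m)

private lemma trunc_coeff_zero (k : ℕ) (u : Polynomial ℂ) : (trunc k u).coeff 0 = 0 := by
  rw [trunc_coeff]; simp

private lemma trunc_dvd (k : ℕ) (u : Polynomial ℂ) (h0 : u.coeff 0 = 0) :
    (Polynomial.X : Polynomial ℂ) ^ (k + 1) ∣ u - trunc k u := by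
  rw [X_pow_dvd_iff]
  intro d hd
  rw [Polynomial.coeff_sub, trunc_coeff]
  rcases Nat.eq_zero_or_pos d with h | h
  · subst h; simp [h0]
  · rw [if_pos (Finset.mem_Icc.mpr ⟨h, by omega⟩), sub_self]

private lemma trunc_natDegree (k : ℕ) (u : Polynomial ℂ) : (trunc k u).natDegree ≤ k := by
  refine Polynomial.natDegree_sum_le_of_forall_le _ _ fun m hm => ?_
  refine le_trans (Polynomial.natDegree_C_mul_le _ _) ?_
  rw [Polynomial.natDegree_X_pow]
  exact (Finset.mem_Icc.mp hm).2

private lemma trunc_comp (k : ℕ) (u v : Polynomial ℂ) :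
    (trunc k u).comp v = ∑ m ∈ Finset.Icc 1 k, Polynomial.C (u.coeff m) * v ^ m := by
  rw [trunc, comp_eq_aeval, map_sum]
  refine Finset.sum_congr rfl fun m _ => ?_
  rw [map_mul, map_pow, Polynomial.aeval_X, Polynomial.aeval_C, Polynomial.algebraMap_eq]

private lemma key_claim (n k : ℕ) (hk : 1 ≤ k) (j₀ : Fin n)
    (γ' δ' : Fin n → Polynomial ℂ)
    (hγ'0 : ∀ j, (γ' j).coeff 0 = 0) (hδ'0 : ∀ j, (δ' j).coeff 0 = 0)
    (hγj₀ : (Polynomial.X : Polynomial ℂ) ^ (k+1) ∣ γ' j₀ - Polynomial.X)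
    (hδj₀ : (Polynomial.X : Polynomial ℂ) ^ (k+1) ∣ δ' j₀ - Polynomial.X)
    (hS : ∀ i, 1 ≤ i → i ≤ k → ∀ P : MvPolynomial (Fin n) ℂ,
        P.totalDegree ≤ k → MvPolynomial.coeff 0 P = 0 →
        ((Polynomial.X : Polynomial ℂ) ^ (i+1) ∣ MvPolynomial.aeval γ' P ↔
          (Polynomial.X : Polynomial ℂ) ^ (i+1) ∣ MvPolynomial.aeval δ' P)) :
    ∀ j, (Polynomial.X : Polynomial ℂ) ^ (k+1) ∣ γ' j - δ' j := by
  intro j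
  have htr : trunc k (γ' j) = trunc k (δ' j) := by
    by_contra hne
    set h : Polynomial ℂ := trunc k (γ' j) - trunc k (δ' j) with hh
    have hne' : h ≠ 0 := sub_ne_zero.mpr hne
    set m := h.natTrailingDegree with hm
    have hcm : h.coeff m ≠ 0 := by
      have := Polynomial.trailingCoeff_nonzero_iff_nonzero.mpr hne'
      rwa [Polynomial.trailingCoeff] at this
    have hm1 : 1 ≤ m := by
      by_contra hm0
      push_neg at hm0
      have hcz : h.coeff 0 = 0 := by
        rw [hh, Polynomial.coeff_sub, trunc_coeff_zero, trunc_coeff_zero, sub_zero]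
      apply hcm
      rw [show m = 0 by omega]
      exact hcz
    have hmk : m ≤ k := le_trans (Polynomial.natTrailingDegree_le_natDegree h)
      (le_trans (Polynomial.natDegree_sub_le _ _)
        (max_le (trunc_natDegree k _) (trunc_natDegree k _)))
    set P : MvPolynomial (Fin n) ℂ := MvPolynomial.X j -
      ∑ l ∈ Finset.Icc 1 k, MvPolynomial.C ((γ' j).coeff l) * MvPolynomial.X j₀ ^ l with hP
    have haevalP : ∀ (η : Fin n → Polynomial ℂ),
        MvPolynomial.aeval η P = η j - (trunc k (γ' j)).comp (η j₀) := by
      intro η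
      rw [hP, map_sub, MvPolynomial.aeval_X, map_sum, trunc_comp]
      congr 1
      refine Finset.sum_congr rfl fun l _ => ?_
      rw [map_mul, map_pow, MvPolynomial.aeval_X, MvPolynomial.aeval_C,
        Polynomial.algebraMap_eq]
    have hPdeg : P.totalDegree ≤ k := by
      have hs : (∑ l ∈ Finset.Icc 1 k,
          MvPolynomial.C ((γ' j).coeff l) * MvPolynomial.X j₀ ^ l).totalDegree ≤ k := by
        refine le_trans (MvPolynomial.totalDegree_finset_sum _ _) (Finset.sup_le fun l hl => ?_)
        refine le_trans (MvPolynomial.totalDegree_mul _ _) ?_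
        rw [MvPolynomial.totalDegree_C, zero_add]
        refine le_trans (MvPolynomial.totalDegree_pow _ _) ?_
        rw [MvPolynomial.totalDegree_X, mul_one]
        exact (Finset.mem_Icc.mp hl).2
      rw [hP, sub_eq_add_neg]
      refine le_trans (MvPolynomial.totalDegree_add _ _) (max_le ?_ ?_)
      · rw [MvPolynomial.totalDegree_X]; exact hk
      · rw [MvPolynomial.totalDegree_neg]; exact hs
    have hPc0 : MvPolynomial.coeff 0 P = 0 := by
      rw [hP, MvPolynomial.coeff_sub, MvPolynomial.coeff_zero_X]
      rw [MvPolynomial.coeff_sum]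
      rw [Finset.sum_eq_zero fun l hl => ?_]
      · ring
      · rw [MvPolynomial.coeff_C_mul, MvPolynomial.coeff_X_pow, if_neg, mul_zero]
        intro hcon
        rw [Finsupp.single_eq_zero] at hcon
        have := (Finset.mem_Icc.mp hl).1
        omega
    have hγdvdP : (Polynomial.X : Polynomial ℂ) ^ (m+1) ∣ MvPolynomial.aeval γ' P := by
      rw [haevalP]
      have d1 := trunc_dvd k (γ' j) (hγ'0 j)
      have d2 : (Polynomial.X : Polynomial ℂ) ^ (k+1) ∣
          (trunc k (γ' j)).comp Polynomial.X - (trunc k (γ' j)).comp (γ' j₀) := by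
        refine lemD _ ?_
        rw [show (Polynomial.X : Polynomial ℂ) - γ' j₀ = -(γ' j₀ - Polynomial.X) by ring]
        exact dvd_neg.mpr hγj₀
      have e : γ' j - (trunc k (γ' j)).comp (γ' j₀) =
          (γ' j - trunc k (γ' j)) + ((trunc k (γ' j)).comp Polynomial.X -
            (trunc k (γ' j)).comp (γ' j₀)) := by
        rw [Polynomial.comp_X]; ring
      rw [e]
      exact dvd_trans (pow_dvd_pow _ (by omega)) (dvd_add d1 d2)
    have hδdvdP : (Polynomial.X : Polynomial ℂ) ^ (m+1) ∣ MvPolynomial.aeval δ' P :=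
      (hS m hm1 hmk P hPdeg hPc0).mp hγdvdP
    rw [haevalP] at hδdvdP
    have d1 := trunc_dvd k (δ' j) (hδ'0 j)
    have d2 : (Polynomial.X : Polynomial ℂ) ^ (k+1) ∣
        (trunc k (γ' j)).comp Polynomial.X - (trunc k (γ' j)).comp (δ' j₀) := by
      refine lemD _ ?_
      rw [show (Polynomial.X : Polynomial ℂ) - δ' j₀ = -(δ' j₀ - Polynomial.X) by ring]
      exact dvd_neg.mpr hδj₀
    have e : trunc k (δ' j) - trunc k (γ' j) =
        (δ' j - (trunc k (γ' j)).comp (δ' j₀)) - (δ' j - trunc k (δ' j)) -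
          ((trunc k (γ' j)).comp Polynomial.X - (trunc k (γ' j)).comp (δ' j₀)) := by
      rw [Polynomial.comp_X]; ring
    have h3 : (Polynomial.X : Polynomial ℂ) ^ (m+1) ∣ trunc k (δ' j) - trunc k (γ' j) := by
      rw [e]
      have hp : (Polynomial.X : Polynomial ℂ) ^ (m+1) ∣ (Polynomial.X : Polynomial ℂ) ^ (k+1) :=
        pow_dvd_pow _ (by omega)
      exact dvd_sub (dvd_sub hδdvdP (hp.trans d1)) (hp.trans d2)
    have h4 : (Polynomial.X : Polynomial ℂ) ^ (m+1) ∣ h := by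
      rw [hh, ← neg_sub]
      exact dvd_neg.mpr h3
    exact hcm (X_pow_dvd_iff.mp h4 m (lt_add_one m))
  have d1 := trunc_dvd k (γ' j) (hγ'0 j)
  have d2 := trunc_dvd k (δ' j) (hδ'0 j)
  have e : γ' j - δ' j = (γ' j - trunc k (γ' j)) - (δ' j - trunc k (δ' j)) +
      (trunc k (γ' j) - trunc k (δ' j)) := by ring
  have hz : trunc k (γ' j) - trunc k (δ' j) = 0 := by rw [htr, sub_self]
  rw [e, hz, add_zero]
  exact dvd_sub d1 d2

private lemma aeval_comp_eq {n : ℕ} (γ : Fin n → Polynomial ℂ) (φ : Polynomial ℂ)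
    (P : MvPolynomial (Fin n) ℂ) :
    MvPolynomial.aeval (fun j => (γ j).comp φ) P = (MvPolynomial.aeval γ P).comp φ := by
  have h := MvPolynomial.comp_aeval γ (Polynomial.aeval φ : Polynomial ℂ →ₐ[ℂ] Polynomial ℂ)
  have h2 := DFunLike.congr_fun h P
  rw [AlgHom.comp_apply] at h2
  simp only [comp_eq_aeval]
  exact h2.symm

private lemma coeff_one_ne_zero_of_dvd {f ψ : Polynomial ℂ} {k : ℕ} (hk : 1 ≤ k)
    (hψ0 : ψ.coeff 0 = 0) (hf1 : f.coeff 1 ≠ 0)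
    (hdvd : (Polynomial.X : Polynomial ℂ) ^ (k+1) ∣ f.comp ψ - Polynomial.X) :
    ψ.coeff 1 ≠ 0 := by
  have h2 : (f.comp ψ - Polynomial.X).coeff 1 = 0 :=
    X_pow_dvd_iff.mp hdvd 1 (by omega)
  rw [Polynomial.coeff_sub, Polynomial.coeff_X_one, comp_coeff_one _ _ hψ0] at h2
  intro hc
  rw [hc, mul_zero] at h2
  norm_num at h2

/-- The map sending a regular `k`-jet `γ` of a curve in `ℂⁿ` to the flag of
solution spaces `S_γ^1 ⊇ … ⊇ S_γ^k` (where `S_γ^i` consists of those polynomials `P` of total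
degree at most `k` with zero constant term such that `P(γ(t)) ≡ 0 mod t^{i+1}`) is invariant
under reparametrisation and injective on reparametrisation orbits: two regular `k`-jets `γ`, `δ`
have the same solution flags iff `δ = γ ∘ φ mod t^{k+1}` for some `φ ∈ ℂ[t]` with `φ(0) = 0`
and nonzero coefficient of `t`. -/
theorem statement0 (n k : ℕ) (hn : 1 ≤ n) (hk : 1 ≤ k)
    (γ δ : Fin n → Polynomial ℂ)
    (hγdeg : ∀ j, (γ j).natDegree ≤ k) (hγ0 : ∀ j, (γ j).coeff 0 = 0)
    (hγreg : ∃ j, (γ j).coeff 1 ≠ 0)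
    (hδdeg : ∀ j, (δ j).natDegree ≤ k) (hδ0 : ∀ j, (δ j).coeff 0 = 0)
    (hδreg : ∃ j, (δ j).coeff 1 ≠ 0) :
    (∀ i : ℕ, 1 ≤ i → i ≤ k →
        {P : MvPolynomial (Fin n) ℂ |
            P.totalDegree ≤ k ∧ MvPolynomial.coeff 0 P = 0 ∧
              (Polynomial.X : Polynomial ℂ) ^ (i + 1) ∣ MvPolynomial.aeval γ P} =
        {P : MvPolynomial (Fin n) ℂ |
            P.totalDegree ≤ k ∧ MvPolynomial.coeff 0 P = 0 ∧
              (Polynomial.X : Polynomial ℂ) ^ (i + 1) ∣ MvPolynomial.aeval δ P}) ↔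
      ∃ φ : Polynomial ℂ, φ.coeff 0 = 0 ∧ φ.coeff 1 ≠ 0 ∧
        ∀ j, (Polynomial.X : Polynomial ℂ) ^ (k + 1) ∣ (δ j - (γ j).comp φ) := by
  constructor
  · intro hS
    obtain ⟨j₀, hj₀⟩ := hγreg
    have hδj₀ : (δ j₀).coeff 1 ≠ 0 := by
      intro hc
      have hmem : (MvPolynomial.X j₀ : MvPolynomial (Fin n) ℂ) ∈
          {P : MvPolynomial (Fin n) ℂ |
            P.totalDegree ≤ k ∧ MvPolynomial.coeff 0 P = 0 ∧
              (Polynomial.X : Polynomial ℂ) ^ (1 + 1) ∣ MvPolynomial.aeval δ P} := by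
        refine ⟨?_, MvPolynomial.coeff_zero_X j₀, ?_⟩
        · rw [MvPolynomial.totalDegree_X]; exact hk
        · rw [MvPolynomial.aeval_X, X_pow_dvd_iff]
          intro d hd
          interval_cases d
          · exact hδ0 j₀
          · exact hc
      rw [← hS 1 le_rfl hk] at hmem
      obtain ⟨-, -, hdvd⟩ := hmem
      rw [MvPolynomial.aeval_X, X_pow_dvd_iff] at hdvd
      exact hj₀ (hdvd 1 (by omega))
    obtain ⟨φ, hφ0, hφdvd⟩ := inv_lemma (γ j₀) (hγ0 j₀) hj₀ k
    have hφ1 : φ.coeff 1 ≠ 0 := coeff_one_ne_zero_of_dvd hk hφ0 hj₀ hφdvd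
    obtain ⟨ψ, hψ0, hψdvd⟩ := inv_lemma (δ j₀) (hδ0 j₀) hδj₀ k
    have hψ1 : ψ.coeff 1 ≠ 0 := coeff_one_ne_zero_of_dvd hk hψ0 hδj₀ hψdvd
    have key : ∀ j, (Polynomial.X : Polynomial ℂ) ^ (k+1) ∣
        (γ j).comp φ - (δ j).comp ψ := by
      refine key_claim n k hk j₀ (fun j => (γ j).comp φ) (fun j => (δ j).comp ψ)
        (fun j => comp_coeff_zero (hγ0 j) hφ0) (fun j => comp_coeff_zero (hδ0 j) hψ0)
        hφdvd hψdvd ?_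
      intro i h1 h2 P hd hc
      have hset := hS i h1 h2
      have hmid : ((Polynomial.X : Polynomial ℂ) ^ (i+1) ∣ MvPolynomial.aeval γ P ↔
          (Polynomial.X : Polynomial ℂ) ^ (i+1) ∣ MvPolynomial.aeval δ P) := by
        constructor
        · intro hx; exact ((Set.ext_iff.mp hset P).mp ⟨hd, hc, hx⟩).2.2
        · intro hx; exact ((Set.ext_iff.mp hset P).mpr ⟨hd, hc, hx⟩).2.2
      rw [aeval_comp_eq, aeval_comp_eq]
      constructor
      · intro hx
        exact lemA hψ0 (hmid.mp (lemB hφ0 hφ1 hx))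
      · intro hx
        exact lemA hφ0 (hmid.mpr (lemB hψ0 hψ1 hx))
    obtain ⟨χ, hχ0, hχdvd⟩ := inv_lemma ψ hψ0 hψ1 k
    have hχ1 : χ.coeff 1 ≠ 0 := coeff_one_ne_zero_of_dvd hk hχ0 hψ1 hχdvd
    refine ⟨φ.comp χ, comp_coeff_zero hφ0 hχ0, ?_, ?_⟩
    · rw [comp_coeff_one _ _ hχ0]; exact mul_ne_zero hφ1 hχ1
    · intro j
      have e : δ j - (γ j).comp (φ.comp χ) =
          ((δ j).comp Polynomial.X - (δ j).comp (ψ.comp χ)) +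
            ((δ j).comp ψ - (γ j).comp φ).comp χ := by
        rw [Polynomial.comp_X, Polynomial.sub_comp, Polynomial.comp_assoc,
          Polynomial.comp_assoc]
        ring
      rw [e]
      refine dvd_add (lemD _ ?_) (lemA hχ0 ?_)
      · rw [show (Polynomial.X : Polynomial ℂ) - ψ.comp χ =
            -(ψ.comp χ - Polynomial.X) by ring]
        exact dvd_neg.mpr hχdvd
      · rw [show (δ j).comp ψ - (γ j).comp φ = -((γ j).comp φ - (δ j).comp ψ) by ring]
        exact dvd_neg.mpr (key j)
  · rintro ⟨φ, hφ0, hφ1, hdvd⟩ i hi1 hik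
    ext P
    simp only [Set.mem_setOf_eq]
    have h1 : (Polynomial.X : Polynomial ℂ) ^ (k+1) ∣
        MvPolynomial.aeval δ P - MvPolynomial.aeval (fun j => (γ j).comp φ) P := by
      refine lemC _ _ _ ?_ P
      intro j
      exact hdvd j
    have hip : (Polynomial.X : Polynomial ℂ) ^ (i+1) ∣
        MvPolynomial.aeval δ P - MvPolynomial.aeval (fun j => (γ j).comp φ) P :=
      (pow_dvd_pow _ (by omega)).trans h1
    have hiff : ((Polynomial.X : Polynomial ℂ) ^ (i+1) ∣ MvPolynomial.aeval γ P ↔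
        (Polynomial.X : Polynomial ℂ) ^ (i+1) ∣ MvPolynomial.aeval δ P) := by
      constructor
      · intro h
        have h3 : (Polynomial.X : Polynomial ℂ) ^ (i+1) ∣
            MvPolynomial.aeval (fun j => (γ j).comp φ) P := by
          rw [aeval_comp_eq]; exact lemA hφ0 h
        have e : MvPolynomial.aeval δ P =
            (MvPolynomial.aeval δ P - MvPolynomial.aeval (fun j => (γ j).comp φ) P) +
              MvPolynomial.aeval (fun j => (γ j).comp φ) P := by ring
        rw [e]
        exact dvd_add hip h3
      · intro h
        have h3 : (Polynomial.X : Polynomial ℂ) ^ (i+1) ∣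
            MvPolynomial.aeval (fun j => (γ j).comp φ) P := by
          have e : MvPolynomial.aeval (fun j => (γ j).comp φ) P =
              MvPolynomial.aeval δ P -
                (MvPolynomial.aeval δ P - MvPolynomial.aeval (fun j => (γ j).comp φ) P) := by
            ring
          rw [e]
          exact dvd_sub h hip
        rw [aeval_comp_eq] at h3
        exact lemB hφ0 hφ1 h3
    tauto
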